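/- Let (H,L) be a dynamical base and χ an invariant character of L. Let Ξ_χ⊆H be the intersection over all left H-modules V of the annihilators of V[χ], a bi-ideal annihilated by the counit, and H^χ=H/Ξ_χ the quotient bialgebra. Then the characters of the bialgebra H^χ, viewed via the projection H→H^χ as a subset of the character group Ĥ of H, constitute a subgroup of Ĥ equal to the isotropy subgroup Ĥ^χ of χ under the action of Ĥ on invariant characters. -/

import Mathlib

/- Preliminaries: dynamical bases (Hopf algebra H, base algebra L) following Mudrov,
"On dynamical smash product". -/

noncomputable section
open TensorProduct LinearMap

namespace Dyn

variable (k : Type*) [Field k]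
variable (H : Type*) [Ring H] [HopfAlgebra k H]
variable (L : Type*) [Ring L] [Algebra k L]

/-- The "diagonal" action of `H` on a tensor product of two `H`-modules,
`h ⊗ (a ⊗ b) ↦ (h⁽¹⁾ ▷ a) ⊗ (h⁽²⁾ ▷ b)`, where the actions are given in
uncurried form `H ⊗ A → A`, `H ⊗ B → B`. -/
def diagAct {A B : Type*} [AddCommGroup A] [Module k A] [AddCommGroup B] [Module k B]
    (fA : H ⊗[k] A →ₗ[k] A) (fB : H ⊗[k] B →ₗ[k] B) :
    H ⊗[k] (A ⊗[k] B) →ₗ[k] A ⊗[k] B :=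
  TensorProduct.map fA fB
    ∘ₗ (tensorTensorTensorComm k H H A B).toLinearMap
    ∘ₗ rTensor (A ⊗[k] B) (Coalgebra.comul (R := k) (A := H))

/-- The right-hand side of the Yetter-Drinfeld compatibility condition
`h ⊗ λ ↦ h⁽¹⁾ λ⁽¹⁾ γ(h⁽³⁾) ⊗ (h⁽²⁾ ▷ λ^[∞])`, as a linear map `H ⊗ L → H ⊗ L`,
built from an action `act` and a coaction `coact`. -/
def ydRHS (act : H →ₗ[k] L →ₗ[k] L) (coact : L →ₗ[k] H ⊗[k] L) :
    H ⊗[k] L →ₗ[k] H ⊗[k] L :=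
  rTensor L (LinearMap.mul' k H)
    ∘ₗ (TensorProduct.assoc k H H L).symm.toLinearMap
    ∘ₗ TensorProduct.map (LinearMap.mul' k H)
        (TensorProduct.map (HopfAlgebra.antipode (R := k)) (TensorProduct.lift act)
          ∘ₗ (TensorProduct.assoc k H H L).toLinearMap
          ∘ₗ rTensor L (TensorProduct.comm k H H).toLinearMap)
    ∘ₗ (tensorTensorTensorComm k H (H ⊗[k] H) H L).toLinearMap
    ∘ₗ TensorProduct.map
        (lTensor H (Coalgebra.comul (R := k) (A := H)) ∘ₗ Coalgebra.comul (R := k))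
        coact

/-- A base algebra `L` over a Hopf algebra `H` (so `(H, L)` is a dynamical base):
`L` is a left `H`-module algebra, a left `H`-comodule algebra, the action and coaction
satisfy the Yetter-Drinfeld condition, and `L` is braided commutative. -/
structure BaseAlgebra : Type _ where
  /-- the left action of `H` on `L` -/
  act : H →ₗ[k] L →ₗ[k] L
  /-- the left coaction of `H` on `L` -/
  coact : L →ₗ[k] H ⊗[k] L
  act_mul_act : ∀ (h h' : H) (l : L), act (h * h') l = act h (act h' l)
  act_one_act : ∀ l : L, act 1 l = l
  /-- `L` is an `H`-module algebra: `h ▷ (λμ) = (h⁽¹⁾ ▷ λ)(h⁽²⁾ ▷ μ)` -/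
  moduleAlgebra :
    TensorProduct.lift act ∘ₗ lTensor H (LinearMap.mul' k L) =
      LinearMap.mul' k L ∘ₗ diagAct k H (TensorProduct.lift act) (TensorProduct.lift act)
  /-- `h ▷ 1 = ε(h) 1` -/
  act_unit : ∀ h : H, act h 1 = Coalgebra.counit (R := k) h • (1 : L)
  /-- coassociativity of the coaction -/
  coassoc :
    rTensor L (Coalgebra.comul (R := k) (A := H)) ∘ₗ coact =
      (TensorProduct.assoc k H H L).symm.toLinearMap ∘ₗ lTensor H coact ∘ₗ coact
  /-- counit property of the coaction -/
  counit_coact :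
    ∀ l : L, (TensorProduct.lid k L)
      (rTensor L (Coalgebra.counit (R := k) (A := H)) (coact l)) = l
  /-- `L` is an `H`-comodule algebra: the coaction is an algebra map -/
  coact_mul : ∀ l m : L, coact (l * m) = coact l * coact m
  coact_one : coact 1 = 1
  /-- the Yetter-Drinfeld compatibility condition -/
  yd : coact ∘ₗ TensorProduct.lift act = ydRHS k H L act coact
  /-- braided commutativity: `λμ = (λ⁽¹⁾ ▷ μ) λ^[∞]` -/
  braided :
    LinearMap.mul' k L =
      LinearMap.mul' k L ∘ₗ rTensor L (TensorProduct.lift act)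
        ∘ₗ (TensorProduct.assoc k H L L).symm.toLinearMap
        ∘ₗ lTensor H (TensorProduct.comm k L L).toLinearMap
        ∘ₗ (TensorProduct.assoc k H L L).toLinearMap
        ∘ₗ rTensor L coact

variable {k H L}

/-- An invariant character of the base algebra `L`: a unital algebra homomorphism
`L → k` with `χ(h ▷ λ) = ε(h) χ(λ)`. -/
def BaseAlgebra.IsInvChar (B : BaseAlgebra k H L) (χ : L →ₐ[k] k) : Prop :=
  ∀ (h : H) (l : L), χ (B.act h l) = Coalgebra.counit (R := k) h * χ l

/-- `e ∈ L` is a left `χ`-generator: `λ e = χ(λ) e` for all `λ`. -/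
def IsLeftGen (χ : L →ₐ[k] k) (e : L) : Prop := ∀ l : L, l * e = χ l • e

/-- `e ∈ L` is a right `χ`-generator: `e λ = χ(λ) e` for all `λ`. -/
def IsRightGen (χ : L →ₐ[k] k) (e : L) : Prop := ∀ l : L, e * l = χ l • e

/-- The homomorphism `ι_χ : L → H`, `λ ↦ λ⁽¹⁾ χ(λ^[∞])`, associated to a character. -/
def BaseAlgebra.iota (B : BaseAlgebra k H L) (χ : L →ₗ[k] k) : L →ₗ[k] H :=
  (TensorProduct.rid k H).toLinearMap ∘ₗ lTensor H χ ∘ₗ B.coact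

/-- Evaluation of a functional `η ∈ H^*` against the first leg of the coaction:
`λ ↦ ⟨η, λ⁽¹⁾⟩ λ^[∞]`.  This is the action of `H^*_op ⊂ D(H)` on `L`. -/
def BaseAlgebra.coactEval (B : BaseAlgebra k H L) (η : H →ₗ[k] k) : L →ₗ[k] L :=
  (TensorProduct.lid k L).toLinearMap ∘ₗ rTensor L η ∘ₗ B.coact

/-- The adjoint character `χ̃ : λ ↦ χ(ϑ̄ ▷ λ)` of a character `χ`, where
`ϑ̄ = Σᵢ ηⁱ γ(hᵢ)` is the inverse Drinfeld element of the double, computed with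
respect to a basis `b` of `H`: `χ̃(λ) = Σᵢ ⟨ηⁱ, (γ(hᵢ) ▷ λ)⁽¹⁾⟩ χ((γ(hᵢ) ▷ λ)^[∞])`. -/
def BaseAlgebra.adjChar (B : BaseAlgebra k H L) (χ : L →ₗ[k] k)
    {ι : Type*} [Fintype ι] [DecidableEq ι] (b : Module.Basis ι k H) : L →ₗ[k] k :=
  ∑ i : ι, χ ∘ₗ B.coactEval (b.coord i) ∘ₗ B.act (HopfAlgebra.antipode (R := k) (b i))

end Dyn

namespace Dyn

open LinearMap TensorProduct

universe u

variable {k : Type*} [Field k] {H : Type u} [Ring H] [HopfAlgebra k H]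
variable {L : Type*} [Ring L] [Algebra k L]

/-- The bi-ideal `Ξ_χ ⊆ H`: the intersection over all left `H`-modules `V` of the
annihilators of `V[χ] = {v : ι_χ(λ)·v = χ(λ)v for all λ}`. -/
def Xi (B : BaseAlgebra k H L) (χ : L →ₗ[k] k) : Set H :=
  {h : H | ∀ (V : Type u) (_ : AddCommGroup V) (_ : Module k V)
      (ρ : H →ₗ[k] V →ₗ[k] V),
      (∀ v : V, ρ 1 v = v) →
      (∀ (h' h'' : H) (v : V), ρ (h' * h'') v = ρ h' (ρ h'' v)) →
      ∀ v : V, (∀ l : L, ρ (B.iota χ l) v = χ l • v) → ρ h v = 0}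

/-! ### Auxiliary definitions and lemmas -/

/-- Convolution of two linear functionals on `H`. -/
def convL (α β : H →ₗ[k] k) : H →ₗ[k] k :=
  (TensorProduct.lid k k).toLinearMap ∘ₗ TensorProduct.map α β
    ∘ₗ Coalgebra.comul (R := k) (A := H)

lemma convL_apply (α β : H →ₗ[k] k) (h : H) :
    convL α β h =
      (TensorProduct.lid k k) (TensorProduct.map α β (Coalgebra.comul (R := k) h)) := rfl

lemma ev_aux (α : H →ₗ[k] k) (χ : L →ₗ[k] k) (t : H ⊗[k] L) :
    α ((TensorProduct.rid k H) (lTensor H χ t)) =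
      χ ((TensorProduct.lid k L) (rTensor L α t)) := by
  induction t using TensorProduct.induction_on with
  | zero => simp
  | tmul h l => simp [mul_comm]
  | add x y hx hy => simp [hx, hy]

lemma iota_eq (B : BaseAlgebra k H L) (χ : L →ₗ[k] k) (α : H →ₗ[k] k) (l : L) :
    α (B.iota χ l) = χ (B.coactEval α l) := by
  simpa [BaseAlgebra.iota, BaseAlgebra.coactEval] using ev_aux α χ (B.coact l)

lemma iota_sub_mem_Xi (B : BaseAlgebra k H L) (χ : L →ₗ[k] k) (l : L) :
    B.iota χ l - χ l • 1 ∈ Xi B χ := by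
  intro V _ _ ρ h1 _ v hv
  have : ρ (B.iota χ l - χ l • (1 : H)) v
      = ρ (B.iota χ l) v - χ l • ρ 1 v := by
    simp [map_sub, map_smul, LinearMap.sub_apply, LinearMap.smul_apply]
  rw [this, h1, hv, sub_self]

lemma vanishing_iff (B : BaseAlgebra k H L) (χ : L →ₐ[k] k) (α : H →ₐ[k] k) :
    (∀ h ∈ Xi B χ.toLinearMap, α h = 0) ↔
      ∀ l : L, χ (B.coactEval α.toLinearMap l) = χ l := by
  constructor
  · intro hα l
    have h0 := hα _ (iota_sub_mem_Xi B χ.toLinearMap l)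
    have h1 : α (B.iota χ.toLinearMap l) = χ l := by
      have : α (B.iota χ.toLinearMap l) - χ l • α 1 = 0 := by
        simpa [map_sub, map_smul] using h0
      simpa [map_one, smul_eq_mul] using sub_eq_zero.mp this
    have h2 := iota_eq B χ.toLinearMap α.toLinearMap l
    simp only [AlgHom.toLinearMap_apply] at h2
    rw [← h2]; exact h1
  · intro hiso h hh
    set ρ : H →ₗ[k] H →ₗ[k] H := (LinearMap.lsmul k H) ∘ₗ α.toLinearMap with hρ
    have hcon : ρ h 1 = 0 := by
      refine hh H _ _ ρ ?_ ?_ 1 ?_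
      · intro v; simp [hρ]
      · intro h' h'' v
        simp only [hρ, LinearMap.comp_apply, AlgHom.toLinearMap_apply, map_mul,
          LinearMap.lsmul_apply]
        rw [mul_smul]
      · intro l
        have h2 := iota_eq B χ.toLinearMap α.toLinearMap l
        simp only [AlgHom.toLinearMap_apply] at h2
        have h3 : α (B.iota χ.toLinearMap l) = χ l := by rw [h2]; exact hiso l
        simp [hρ, h3]
    have hsm : α h • (1 : H) = 0 := by simpa [hρ] using hcon
    by_cases h0 : α h = 0
    · exact h0
    · have h1 : (1 : H) = 0 := by
        have := congrArg (fun x => (α h)⁻¹ • x) hsm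
        simpa [smul_smul, inv_mul_cancel₀ h0] using this
      have : h = 0 := by rw [← mul_one h, h1, mul_zero]
      simp [this]

lemma coactEval_counit (B : BaseAlgebra k H L) (l : L) :
    B.coactEval (Coalgebra.counit (R := k) (A := H)) l = l :=
  B.counit_coact l

set_option synthInstance.maxHeartbeats 1000000 in
/-- `δ ∘ (α ⊗ id)` rewritten so that the inner coaction is applied first. -/
lemma coact_coactEval (B : BaseAlgebra k H L) (α : H →ₗ[k] k) (t : H ⊗[k] L) :
    B.coact ((TensorProduct.lid k L) (rTensor L α t)) =
      (TensorProduct.lid k (H ⊗[k] L)) (rTensor (H ⊗[k] L) α (lTensor H B.coact t)) := by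
  induction t using TensorProduct.induction_on with
  | zero => simp
  | tmul h l => simp
  | add x y hx hy => simp [hx, hy]

set_option synthInstance.maxHeartbeats 1000000 in
lemma conv_assoc_aux (α β : H →ₗ[k] k) (s : H ⊗[k] (H ⊗[k] L)) :
    (TensorProduct.lid k L)
        (rTensor L ((TensorProduct.lid k k).toLinearMap ∘ₗ TensorProduct.map α β)
          ((TensorProduct.assoc k H H L).symm s)) =
      (TensorProduct.lid k L)
        (rTensor L β ((TensorProduct.lid k (H ⊗[k] L)) (rTensor (H ⊗[k] L) α s))) := by
  induction s using TensorProduct.induction_on with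
  | zero => simp
  | tmul h x =>
    induction x using TensorProduct.induction_on with
    | zero => simp
    | tmul h' l => simp [smul_smul, TensorProduct.smul_tmul', mul_comm]
    | add x y hx hy => simp only [TensorProduct.tmul_add, map_add] at hx hy ⊢; rw [hx, hy]
  | add x y hx hy => simp only [map_add] at hx hy ⊢; rw [hx, hy]

set_option synthInstance.maxHeartbeats 1000000 in
lemma coactEval_conv (B : BaseAlgebra k H L) (α β : H →ₗ[k] k) (l : L) :
    B.coactEval (convL α β) l = B.coactEval β (B.coactEval α l) := by
  have hco := LinearMap.congr_fun B.coassoc l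
  simp only [LinearMap.comp_apply, LinearEquiv.coe_coe] at hco
  calc B.coactEval (convL α β) l
      = (TensorProduct.lid k L)
          (rTensor L ((TensorProduct.lid k k).toLinearMap ∘ₗ TensorProduct.map α β)
            (rTensor L (Coalgebra.comul (R := k)) (B.coact l))) := by
        simp [BaseAlgebra.coactEval, convL, LinearMap.rTensor_comp]
    _ = (TensorProduct.lid k L)
          (rTensor L ((TensorProduct.lid k k).toLinearMap ∘ₗ TensorProduct.map α β)
            ((TensorProduct.assoc k H H L).symm (lTensor H B.coact (B.coact l)))) := by
        rw [hco]
    _ = (TensorProduct.lid k L)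
          (rTensor L β ((TensorProduct.lid k (H ⊗[k] L))
            (rTensor (H ⊗[k] L) α (lTensor H B.coact (B.coact l))))) :=
        conv_assoc_aux α β _
    _ = B.coactEval β (B.coactEval α l) := by
        rw [← coact_coactEval B α (B.coact l)]
        simp [BaseAlgebra.coactEval]

/-- Convolution of two characters of `H`, as an algebra homomorphism (using that the
comultiplication and multiplication are algebra maps). -/
def convA (α β : H →ₐ[k] k) : H →ₐ[k] k :=
  (Algebra.TensorProduct.lmul' k).comp
    ((Algebra.TensorProduct.map α β).comp (Bialgebra.comulAlgHom k H))

lemma convA_apply (α β : H →ₐ[k] k) (h : H) :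
    convA α β h = (TensorProduct.lid k k)
      (TensorProduct.map α.toLinearMap β.toLinearMap (Coalgebra.comul (R := k) h)) := by
  have h1 : convA α β h = (Algebra.TensorProduct.lmul' (S := k) k)
      ((Algebra.TensorProduct.map α β) (Bialgebra.comulAlgHom k H h)) := rfl
  have h2 : Bialgebra.comulAlgHom k H h = Coalgebra.comul (R := k) h := rfl
  rw [h1, h2]
  generalize Coalgebra.comul (R := k) h = t
  induction t using TensorProduct.induction_on with
  | zero => simp
  | tmul a b => simp [Algebra.TensorProduct.lmul'_apply_tmul, smul_eq_mul]
  | add x y hx hy => simp only [map_add, hx, hy]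

lemma convA_toLinearMap (α β : H →ₐ[k] k) :
    (convA α β).toLinearMap = convL α.toLinearMap β.toLinearMap :=
  LinearMap.ext fun h => convA_apply α β h

lemma antipode_one' : HopfAlgebra.antipode (R := k) (A := H) 1 = 1 := by
  have h := HopfAlgebra.mul_antipode_rTensor_comul_apply (R := k) (A := H) (a := 1)
  simpa [Algebra.TensorProduct.one_def] using h

lemma map_mul_antipode_rTensor (α : H →ₐ[k] k) (t : H ⊗[k] H) :
    (TensorProduct.lid k k) (TensorProduct.map
        (α.toLinearMap ∘ₗ HopfAlgebra.antipode (R := k)) α.toLinearMap t)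
      = α (LinearMap.mul' k H (rTensor H (HopfAlgebra.antipode (R := k)) t)) := by
  induction t using TensorProduct.induction_on with
  | zero => simp
  | tmul a b => simp [map_mul, smul_eq_mul]
  | add x y hx hy => simp only [map_add, hx, hy]

lemma map_mul_antipode_lTensor (α : H →ₐ[k] k) (t : H ⊗[k] H) :
    (TensorProduct.lid k k) (TensorProduct.map
        α.toLinearMap (α.toLinearMap ∘ₗ HopfAlgebra.antipode (R := k)) t)
      = α (LinearMap.mul' k H (lTensor H (HopfAlgebra.antipode (R := k)) t)) := by
  induction t using TensorProduct.induction_on with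
  | zero => simp
  | tmul a b => simp [map_mul, smul_eq_mul]
  | add x y hx hy => simp only [map_add, hx, hy]

/-- `(α ∘ γ) ⋆ α = ε`. -/
lemma convL_antipode_left (α : H →ₐ[k] k) :
    convL (α.toLinearMap ∘ₗ HopfAlgebra.antipode (R := k)) α.toLinearMap
      = Coalgebra.counit (R := k) (A := H) := by
  refine LinearMap.ext fun h => ?_
  rw [convL_apply, map_mul_antipode_rTensor,
    HopfAlgebra.mul_antipode_rTensor_comul_apply]
  simp

/-- `α ⋆ (α ∘ γ) = ε`. -/
lemma convL_antipode_right (α : H →ₐ[k] k) :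
    convL α.toLinearMap (α.toLinearMap ∘ₗ HopfAlgebra.antipode (R := k))
      = Coalgebra.counit (R := k) (A := H) := by
  refine LinearMap.ext fun h => ?_
  rw [convL_apply, map_mul_antipode_lTensor,
    HopfAlgebra.mul_antipode_lTensor_comul_apply]
  simp

/-- Convolution of functionals on `H ⊗ H`, w.r.t. the tensor-square coalgebra structure. -/
def conv2 (F G : (H ⊗[k] H) →ₗ[k] k) : (H ⊗[k] H) →ₗ[k] k :=
  (TensorProduct.lid k k).toLinearMap ∘ₗ TensorProduct.map F G
    ∘ₗ (tensorTensorTensorComm k H H H H).toLinearMap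
    ∘ₗ TensorProduct.map (Coalgebra.comul (R := k)) (Coalgebra.comul (R := k))

/-- The counit of the tensor-square coalgebra. -/
def eps2 : (H ⊗[k] H) →ₗ[k] k :=
  (TensorProduct.lid k k).toLinearMap ∘ₗ
    TensorProduct.map (Coalgebra.counit (R := k)) (Coalgebra.counit (R := k))

lemma conv2_tmul (F G : (H ⊗[k] H) →ₗ[k] k) (x y : H) :
    conv2 F G (x ⊗ₜ[k] y) = (TensorProduct.lid k k) (TensorProduct.map F G
      ((tensorTensorTensorComm k H H H H)
        (Coalgebra.comul (R := k) x ⊗ₜ[k] Coalgebra.comul (R := k) y))) := rfl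

lemma claim_u1 (F : (H ⊗[k] H) →ₗ[k] k) :
    (TensorProduct.lid k k).toLinearMap ∘ₗ TensorProduct.map F (eps2 (k := k) (H := H))
        ∘ₗ (tensorTensorTensorComm k H H H H).toLinearMap
      = (F ∘ₗ TensorProduct.map (TensorProduct.rid k H).toLinearMap
            (TensorProduct.rid k H).toLinearMap)
        ∘ₗ TensorProduct.map (lTensor H (Coalgebra.counit (R := k)))
            (lTensor H (Coalgebra.counit (R := k))) := by
  ext a b c d
  simp only [LinearMap.comp_apply, LinearEquiv.coe_coe, TensorProduct.map_tmul,
    TensorProduct.tensorTensorTensorComm_tmul, TensorProduct.lid_tmul, lTensor_tmul,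
    rTensor_tmul, TensorProduct.rid_tmul, eps2, smul_eq_mul,
    TensorProduct.AlgebraTensorModule.curry_apply, TensorProduct.curry_apply,
    LinearMap.coe_restrictScalars]
  rw [← TensorProduct.smul_tmul', map_smul, smul_eq_mul, TensorProduct.tmul_smul,
    map_smul, smul_eq_mul]
  ring

lemma claim_u2 (G : (H ⊗[k] H) →ₗ[k] k) :
    (TensorProduct.lid k k).toLinearMap ∘ₗ TensorProduct.map (eps2 (k := k) (H := H)) G
        ∘ₗ (tensorTensorTensorComm k H H H H).toLinearMap
      = (G ∘ₗ TensorProduct.map (TensorProduct.lid k H).toLinearMap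
            (TensorProduct.lid k H).toLinearMap)
        ∘ₗ TensorProduct.map (rTensor H (Coalgebra.counit (R := k)))
            (rTensor H (Coalgebra.counit (R := k))) := by
  ext a b c d
  simp only [LinearMap.comp_apply, LinearEquiv.coe_coe, TensorProduct.map_tmul,
    TensorProduct.tensorTensorTensorComm_tmul, TensorProduct.lid_tmul, lTensor_tmul,
    rTensor_tmul, TensorProduct.rid_tmul, eps2, smul_eq_mul,
    TensorProduct.AlgebraTensorModule.curry_apply, TensorProduct.curry_apply,
    LinearMap.coe_restrictScalars]
  rw [← TensorProduct.smul_tmul', map_smul, smul_eq_mul, TensorProduct.tmul_smul,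
    map_smul, smul_eq_mul]
  ring

lemma conv2_eps2_right (F : (H ⊗[k] H) →ₗ[k] k) : conv2 F eps2 = F := by
  refine TensorProduct.ext' fun x y => ?_
  have h := LinearMap.congr_fun (claim_u1 F)
    (Coalgebra.comul (R := k) x ⊗ₜ[k] Coalgebra.comul (R := k) y)
  simp only [LinearMap.comp_apply, LinearEquiv.coe_coe, TensorProduct.map_tmul,
    Coalgebra.lTensor_counit_comul] at h
  rw [conv2_tmul, h]
  simp

lemma conv2_eps2_left (G : (H ⊗[k] H) →ₗ[k] k) : conv2 eps2 G = G := by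
  refine TensorProduct.ext' fun x y => ?_
  have h := LinearMap.congr_fun (claim_u2 G)
    (Coalgebra.comul (R := k) x ⊗ₜ[k] Coalgebra.comul (R := k) y)
  simp only [LinearMap.comp_apply, LinearEquiv.coe_coe, TensorProduct.map_tmul,
    Coalgebra.rTensor_counit_comul] at h
  rw [conv2_tmul, h]
  simp

lemma claim_a1 (F M G : (H ⊗[k] H) →ₗ[k] k) :
    (TensorProduct.lid k k).toLinearMap ∘ₗ TensorProduct.map (conv2 F M) G
        ∘ₗ (tensorTensorTensorComm k H H H H).toLinearMap
      = ((TensorProduct.lid k k).toLinearMap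
          ∘ₗ TensorProduct.map ((TensorProduct.lid k k).toLinearMap
              ∘ₗ TensorProduct.map F M
              ∘ₗ (tensorTensorTensorComm k H H H H).toLinearMap) G
          ∘ₗ (tensorTensorTensorComm k (H ⊗[k] H) H (H ⊗[k] H) H).toLinearMap)
        ∘ₗ TensorProduct.map (rTensor H (Coalgebra.comul (R := k)))
            (rTensor H (Coalgebra.comul (R := k))) := by
  ext a b c d
  simp [conv2_tmul]

lemma claim_a2 (F M G : (H ⊗[k] H) →ₗ[k] k) :
    (TensorProduct.lid k k).toLinearMap ∘ₗ TensorProduct.map F (conv2 M G)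
        ∘ₗ (tensorTensorTensorComm k H H H H).toLinearMap
      = ((TensorProduct.lid k k).toLinearMap
          ∘ₗ TensorProduct.map F ((TensorProduct.lid k k).toLinearMap
              ∘ₗ TensorProduct.map M G
              ∘ₗ (tensorTensorTensorComm k H H H H).toLinearMap)
          ∘ₗ (tensorTensorTensorComm k H (H ⊗[k] H) H (H ⊗[k] H)).toLinearMap)
        ∘ₗ TensorProduct.map (lTensor H (Coalgebra.comul (R := k)))
            (lTensor H (Coalgebra.comul (R := k))) := by
  ext a b c d
  simp [conv2_tmul]

lemma claim_a3 (F M G : (H ⊗[k] H) →ₗ[k] k) :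
    ((TensorProduct.lid k k).toLinearMap
        ∘ₗ TensorProduct.map ((TensorProduct.lid k k).toLinearMap
            ∘ₗ TensorProduct.map F M
            ∘ₗ (tensorTensorTensorComm k H H H H).toLinearMap) G
        ∘ₗ (tensorTensorTensorComm k (H ⊗[k] H) H (H ⊗[k] H) H).toLinearMap)
      = ((TensorProduct.lid k k).toLinearMap
          ∘ₗ TensorProduct.map F ((TensorProduct.lid k k).toLinearMap
              ∘ₗ TensorProduct.map M G
              ∘ₗ (tensorTensorTensorComm k H H H H).toLinearMap)
          ∘ₗ (tensorTensorTensorComm k H (H ⊗[k] H) H (H ⊗[k] H)).toLinearMap)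
        ∘ₗ TensorProduct.map (TensorProduct.assoc k H H H).toLinearMap
            (TensorProduct.assoc k H H H).toLinearMap := by
  ext a b c d e f
  simp [smul_eq_mul, mul_assoc]

lemma conv2_assoc (F M G : (H ⊗[k] H) →ₗ[k] k) :
    conv2 (conv2 F M) G = conv2 F (conv2 M G) := by
  refine TensorProduct.ext' fun x y => ?_
  have h1 := LinearMap.congr_fun (claim_a1 F M G)
    (Coalgebra.comul (R := k) x ⊗ₜ[k] Coalgebra.comul (R := k) y)
  have h2 := LinearMap.congr_fun (claim_a2 F M G)
    (Coalgebra.comul (R := k) x ⊗ₜ[k] Coalgebra.comul (R := k) y)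
  have h3 := LinearMap.congr_fun (claim_a3 F M G)
    ((rTensor H (Coalgebra.comul (R := k)) (Coalgebra.comul (R := k) x)) ⊗ₜ[k]
     (rTensor H (Coalgebra.comul (R := k)) (Coalgebra.comul (R := k) y)))
  simp only [LinearMap.comp_apply, LinearEquiv.coe_coe, TensorProduct.map_tmul] at h1 h2 h3
  rw [conv2_tmul, conv2_tmul, h1, h2, h3, Coalgebra.coassoc_apply, Coalgebra.coassoc_apply]

/-- `F : x ⊗ y ↦ α(γ(xy))`. -/
def FF (α : H →ₐ[k] k) : (H ⊗[k] H) →ₗ[k] k :=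
  (α.toLinearMap ∘ₗ HopfAlgebra.antipode (R := k)) ∘ₗ LinearMap.mul' k H

/-- `M : x ⊗ y ↦ α(xy)`. -/
def MM (α : H →ₐ[k] k) : (H ⊗[k] H) →ₗ[k] k :=
  α.toLinearMap ∘ₗ LinearMap.mul' k H

/-- `G : x ⊗ y ↦ α(γ(x))·α(γ(y))`. -/
def GG (α : H →ₐ[k] k) : (H ⊗[k] H) →ₗ[k] k :=
  (TensorProduct.lid k k).toLinearMap ∘ₗ
    TensorProduct.map (α.toLinearMap ∘ₗ HopfAlgebra.antipode (R := k))
      (α.toLinearMap ∘ₗ HopfAlgebra.antipode (R := k))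

lemma claim_n1 (α : H →ₐ[k] k) :
    (TensorProduct.lid k k).toLinearMap ∘ₗ TensorProduct.map (FF α) (MM α)
        ∘ₗ (tensorTensorTensorComm k H H H H).toLinearMap
      = ((TensorProduct.lid k k).toLinearMap ∘ₗ
          TensorProduct.map (α.toLinearMap ∘ₗ HopfAlgebra.antipode (R := k)) α.toLinearMap)
        ∘ₗ LinearMap.mul' k (H ⊗[k] H) := by
  ext a b c d
  simp [FF, MM, Algebra.TensorProduct.tmul_mul_tmul, smul_eq_mul]

lemma claim_n2 (α : H →ₐ[k] k) :
    (TensorProduct.lid k k).toLinearMap ∘ₗ TensorProduct.map (MM α) (GG α)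
        ∘ₗ (tensorTensorTensorComm k H H H H).toLinearMap
      = (TensorProduct.lid k k).toLinearMap ∘ₗ
          TensorProduct.map
            ((TensorProduct.lid k k).toLinearMap ∘ₗ
              TensorProduct.map α.toLinearMap
                (α.toLinearMap ∘ₗ HopfAlgebra.antipode (R := k)))
            ((TensorProduct.lid k k).toLinearMap ∘ₗ
              TensorProduct.map α.toLinearMap
                (α.toLinearMap ∘ₗ HopfAlgebra.antipode (R := k))) := by
  ext a b c d
  simp only [LinearMap.comp_apply, LinearEquiv.coe_coe, TensorProduct.map_tmul,
    TensorProduct.tensorTensorTensorComm_tmul, TensorProduct.lid_tmul, smul_eq_mul,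
    MM, GG, LinearMap.mul'_apply, AlgHom.toLinearMap_apply, map_mul,
    TensorProduct.AlgebraTensorModule.curry_apply, TensorProduct.curry_apply,
    LinearMap.coe_restrictScalars]
  ring

lemma conv2_FM (α : H →ₐ[k] k) : conv2 (FF α) (MM α) = eps2 := by
  refine TensorProduct.ext' fun x y => ?_
  have h := LinearMap.congr_fun (claim_n1 α)
    (Coalgebra.comul (R := k) x ⊗ₜ[k] Coalgebra.comul (R := k) y)
  simp only [LinearMap.comp_apply, LinearEquiv.coe_coe, TensorProduct.map_tmul,
    LinearMap.mul'_apply] at h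
  rw [conv2_tmul, h, ← Bialgebra.comul_mul]
  have h2 := LinearMap.congr_fun (convL_antipode_left α) (x * y)
  rw [convL_apply] at h2
  have h3 : (TensorProduct.lid k k) (TensorProduct.map
      (α.toLinearMap ∘ₗ HopfAlgebra.antipode (R := k)) α.toLinearMap
      (Coalgebra.comul (R := k) (x * y))) = Coalgebra.counit (R := k) (x * y) := h2
  rw [h3]
  simp [eps2, smul_eq_mul]

lemma conv2_MG (α : H →ₐ[k] k) : conv2 (MM α) (GG α) = eps2 := by
  refine TensorProduct.ext' fun x y => ?_
  have h := LinearMap.congr_fun (claim_n2 α)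
    (Coalgebra.comul (R := k) x ⊗ₜ[k] Coalgebra.comul (R := k) y)
  simp only [LinearMap.comp_apply, LinearEquiv.coe_coe, TensorProduct.map_tmul] at h
  rw [conv2_tmul, h]
  have h2 := LinearMap.congr_fun (convL_antipode_right α) x
  have h3 := LinearMap.congr_fun (convL_antipode_right α) y
  rw [convL_apply] at h2 h3
  rw [h2, h3]
  simp [eps2, smul_eq_mul]

lemma map_antipode_mul (α : H →ₐ[k] k) (x y : H) :
    α (HopfAlgebra.antipode (R := k) (x * y))
      = α (HopfAlgebra.antipode (R := k) x) * α (HopfAlgebra.antipode (R := k) y) := by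
  have hFG : FF α = GG α := by
    calc FF α = conv2 (FF α) eps2 := (conv2_eps2_right (FF α)).symm
    _ = conv2 (FF α) (conv2 (MM α) (GG α)) := by rw [conv2_MG α]
    _ = conv2 (conv2 (FF α) (MM α)) (GG α) := (conv2_assoc (FF α) (MM α) (GG α)).symm
    _ = conv2 eps2 (GG α) := by rw [conv2_FM α]
    _ = GG α := conv2_eps2_left (GG α)
  have h := LinearMap.congr_fun hFG (x ⊗ₜ[k] y)
  simpa [FF, GG, smul_eq_mul] using h

/-- For a character `α` of `H`, the composite `α ∘ γ` with the antipode is again a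
character of `H`. -/
def antipodeChar (α : H →ₐ[k] k) : H →ₐ[k] k :=
  AlgHom.ofLinearMap (α.toLinearMap ∘ₗ HopfAlgebra.antipode (R := k))
    (by simp [antipode_one']) (fun x y => by simpa using map_antipode_mul α x y)

lemma antipodeChar_toLinearMap (α : H →ₐ[k] k) :
    (antipodeChar α).toLinearMap = α.toLinearMap ∘ₗ HopfAlgebra.antipode (R := k) := rfl

lemma antipodeChar_apply (α : H →ₐ[k] k) (h : H) :
    antipodeChar α h = α (HopfAlgebra.antipode (R := k) h) := rfl

/-- The characters of the quotient bialgebra `H^χ = H/Ξ_χ`, viewed via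
the projection `H → H^χ` as the subset of `Ĥ` of characters vanishing on `Ξ_χ`,
constitute a subgroup of the character group `Ĥ` (under convolution), equal to the
isotropy subgroup `Ĥ^χ = {α : α·χ = χ}` of `χ`. -/
theorem stmt8 (B : BaseAlgebra k H L) (χ : L →ₐ[k] k) (hχ : B.IsInvChar χ) :
    -- equality with the isotropy subgroup
    {α : H →ₐ[k] k | ∀ h ∈ Xi B χ.toLinearMap, α h = 0} =
      {α : H →ₐ[k] k | ∀ l : L, χ (B.coactEval α.toLinearMap l) = χ l} ∧
    -- the set is a subgroup of `Ĥ`: it contains the identity `ε`, and is closed under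
    -- the convolution product and the inverse `α ↦ α ∘ γ`
    (Bialgebra.counitAlgHom k H ∈
      {α : H →ₐ[k] k | ∀ h ∈ Xi B χ.toLinearMap, α h = 0}) ∧
    (∀ α β : H →ₐ[k] k, (∀ h ∈ Xi B χ.toLinearMap, α h = 0) →
      (∀ h ∈ Xi B χ.toLinearMap, β h = 0) →
      ∃ c : H →ₐ[k] k, (∀ h ∈ Xi B χ.toLinearMap, c h = 0) ∧
        ∀ h : H, c h = (TensorProduct.lid k k)
          (TensorProduct.map α.toLinearMap β.toLinearMap
            (Coalgebra.comul (R := k) h))) ∧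
    (∀ α : H →ₐ[k] k, (∀ h ∈ Xi B χ.toLinearMap, α h = 0) →
      ∃ c : H →ₐ[k] k, (∀ h ∈ Xi B χ.toLinearMap, c h = 0) ∧
        ∀ h : H, c h = α (HopfAlgebra.antipode (R := k) h)) := by
  refine ⟨Set.ext fun α => vanishing_iff B χ α, ?_, ?_, ?_⟩
  · rw [Set.mem_setOf_eq]
    refine (vanishing_iff B χ (Bialgebra.counitAlgHom k H)).mpr fun l => ?_
    have h : (Bialgebra.counitAlgHom k H).toLinearMap
        = Coalgebra.counit (R := k) (A := H) := rfl
    rw [h, coactEval_counit]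
  · intro α β hα hβ
    have hαi := (vanishing_iff B χ α).mp hα
    have hβi := (vanishing_iff B χ β).mp hβ
    refine ⟨convA α β, ?_, fun h => convA_apply α β h⟩
    refine (vanishing_iff B χ (convA α β)).mpr fun l => ?_
    rw [convA_toLinearMap, coactEval_conv B α.toLinearMap β.toLinearMap l, hβi, hαi]
  · intro α hα
    have hαi := (vanishing_iff B χ α).mp hα
    refine ⟨antipodeChar α, ?_, fun h => rfl⟩
    refine (vanishing_iff B χ (antipodeChar α)).mpr fun l => ?_
    have h1 : convL (antipodeChar α).toLinearMap α.toLinearMap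
        = Coalgebra.counit (R := k) (A := H) := by
      rw [antipodeChar_toLinearMap]; exact convL_antipode_left α
    have h2 := coactEval_conv B (antipodeChar α).toLinearMap α.toLinearMap l
    rw [h1, coactEval_counit] at h2
    have h3 := hαi (B.coactEval (antipodeChar α).toLinearMap l)
    rw [← h2] at h3
    exact h3.symm

end Dyn
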